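/- For n ≥ 5, the metric dimension of the inclusion graph on nonempty proper subsets of an n-element set equals n; for n = 3 and n = 4 it equals n − 1. -/

import Mathlib

open SimpleGraph Finset

variable {V : Type*}

/-- A set of vertices is resolving if distance vectors to it distinguish vertices. -/
def IsResolving (G : SimpleGraph V) (S : Set V) : Prop :=
  ∀ u v : V, (∀ w ∈ S, G.dist u w = G.dist v w) → u = v

/-- The metric dimension: the least size of a (finite) resolving set. -/
noncomputable def metricDim (G : SimpleGraph V) : ℕ :=
  sInf {k | ∃ S : Finset V, S.card = k ∧ IsResolving G ↑S}

/-- Two vertices are mutually maximally distant. -/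
def MMD (G : SimpleGraph V) (u v : V) : Prop :=
  u ≠ v ∧ (∀ w, G.Adj u w → G.dist v w ≤ G.dist u v) ∧
    (∀ w, G.Adj v w → G.dist u w ≤ G.dist u v)

/-- The strong resolving graph: edges between mutually maximally distant vertices. -/
def strongResolvingGraph (G : SimpleGraph V) : SimpleGraph V where
  Adj u v := MMD G u v
  symm := by
    constructor
    rintro u v ⟨hne, h1, h2⟩
    refine ⟨hne.symm, ?_, ?_⟩
    · intro w hw
      rw [SimpleGraph.dist_comm (u := v) (v := u)]
      exact h2 w hw
    · intro w hw
      rw [SimpleGraph.dist_comm (u := v) (v := u)]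
      exact h1 w hw
  loopless := ⟨fun v h => h.1 rfl⟩

/-- A set strongly resolving a graph. -/
def IsStrongResolving (G : SimpleGraph V) (S : Set V) : Prop :=
  ∀ u v : V, u ≠ v → ∃ w ∈ S,
    G.dist w u = G.dist w v + G.dist v u ∨ G.dist w v = G.dist w u + G.dist u v

/-- Strong metric dimension. -/
noncomputable def sdim (G : SimpleGraph V) : ℕ :=
  sInf {k | ∃ S : Finset V, S.card = k ∧ IsStrongResolving G ↑S}

/-- An independent set of vertices. -/
def IsIndepFinset (G : SimpleGraph V) (S : Finset V) : Prop :=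
  ∀ u ∈ S, ∀ v ∈ S, u ≠ v → ¬ G.Adj u v

/-- Independence number. -/
noncomputable def indepNum (G : SimpleGraph V) : ℕ :=
  sSup {k | ∃ S : Finset V, S.card = k ∧ IsIndepFinset G S}

/-- Vertices of the inclusion graph on `{1,...,n}`: nonempty proper subsets. -/
def SubVert (n : ℕ) := {A : Finset (Fin n) // A.Nonempty ∧ A ≠ Finset.univ}

/-- The inclusion graph on nonempty proper subsets of `{1,...,n}`. -/
def inclGraph (n : ℕ) : SimpleGraph (SubVert n) where
  Adj A B := A.1 ⊂ B.1 ∨ B.1 ⊂ A.1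
  symm := ⟨fun _ _ h => h.symm⟩
  loopless := ⟨fun A h => by
    rcases h with h | h <;> exact (ssubset_irrefl A.1) h⟩

/-- Complement of a vertex of the inclusion graph. -/
def complVert {n : ℕ} (A : SubVert n) : SubVert n :=
  ⟨A.1ᶜ,
    Finset.nonempty_iff_ne_empty.mpr fun h => A.2.2 (by simpa using h),
    fun h => (Finset.nonempty_iff_ne_empty.mp A.2.1) (by simpa using h)⟩

/-- Vertices of the inclusion ideal graph of a product of chain rings:
tuples in a product of chains, excluding bottom and top. -/
def ChainVert {m : ℕ} (d : Fin m → ℕ) := {v : ∀ i, Fin (d i + 2) // v ≠ ⊥ ∧ v ≠ ⊤}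

/-- The inclusion graph on a product of chains (minus bottom and top),
modelling the inclusion ideal graph of a product of principal ideal rings. -/
def chainGraph {m : ℕ} (d : Fin m → ℕ) : SimpleGraph (ChainVert d) where
  Adj I J := I.1 < J.1 ∨ J.1 < I.1
  symm := ⟨fun _ _ h => h.symm⟩
  loopless := ⟨fun I h => by rcases h with h | h <;> exact lt_irrefl _ h⟩


section InclProofDev

variable {n : ℕ}

lemma InclP.vert_ne_iff {A B : SubVert n} : A ≠ B ↔ A.1 ≠ B.1 :=
  not_congr Subtype.ext_iff

lemma InclP.exists_common {A B : SubVert n} (h1 : ¬ A.1 ⊆ B.1) (h2 : ¬ B.1 ⊆ A.1)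
    (h3 : A.1 ≠ B.1ᶜ) :
    ∃ C : SubVert n, (inclGraph n).Adj A C ∧ (inclGraph n).Adj C B := by
  by_cases hne : (A.1 ∩ B.1).Nonempty
  · refine ⟨⟨A.1 ∩ B.1, hne, fun h => A.2.2 (univ_subset_iff.mp (by
      intro x _
      have hx : x ∈ A.1 ∩ B.1 := by rw [h]; exact Finset.mem_univ x
      exact (Finset.mem_inter.mp hx).1))⟩,
      Or.inr ?_, Or.inl ?_⟩
    · exact (inter_subset_left).ssubset_of_ne (fun h => h1 (inter_eq_left.mp h))
    · exact (inter_subset_right).ssubset_of_ne (fun h => h2 (inter_eq_right.mp h))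
  · have hd : A.1 ∩ B.1 = ∅ := not_nonempty_iff_eq_empty.mp hne
    obtain ⟨a, ha⟩ := A.2.1
    refine ⟨⟨A.1 ∪ B.1, ⟨a, mem_union_left _ ha⟩, fun h => h3 ?_⟩, Or.inl ?_, Or.inr ?_⟩
    · ext x
      simp only [Finset.mem_compl]
      constructor
      · intro hx hxB
        have := Finset.eq_empty_iff_forall_notMem.mp hd x
        exact this (Finset.mem_inter.mpr ⟨hx, hxB⟩)
      · intro hxB
        have hx : x ∈ A.1 ∪ B.1 := by rw [h]; exact Finset.mem_univ x
        rcases Finset.mem_union.mp hx with h' | h'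
        · exact h'
        · exact absurd h' hxB
    · exact (subset_union_left).ssubset_of_ne (fun h => h2 (union_eq_left.mp h.symm))
    · exact (subset_union_right).ssubset_of_ne (fun h => h1 (union_eq_right.mp h.symm))

lemma InclP.not_adj_of_not_subset {A B : SubVert n} (h1 : ¬ A.1 ⊆ B.1) (h2 : ¬ B.1 ⊆ A.1) :
    ¬ (inclGraph n).Adj A B := by
  rintro (h | h)
  · exact h1 h.subset
  · exact h2 h.subset

lemma InclP.dist_eq_two {A B : SubVert n} (h1 : ¬ A.1 ⊆ B.1) (h2 : ¬ B.1 ⊆ A.1)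
    (h3 : A.1 ≠ B.1ᶜ) : (inclGraph n).dist A B = 2 := by
  obtain ⟨C, hAC, hCB⟩ := InclP.exists_common h1 h2 h3
  let p : (inclGraph n).Walk A B := .cons hAC (.cons hCB .nil)
  have hle : (inclGraph n).dist A B ≤ 2 := SimpleGraph.dist_le p
  have hr : (inclGraph n).Reachable A B := p.reachable
  have h0 : (inclGraph n).dist A B ≠ 0 := by
    intro h0
    rw [hr.dist_eq_zero_iff] at h0
    exact InclP.vert_ne_iff.mpr (fun h => h1 (le_of_eq h)) h0
  have hne1 : (inclGraph n).dist A B ≠ 1 := by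
    intro hd
    rw [SimpleGraph.dist_eq_one_iff_adj] at hd
    exact InclP.not_adj_of_not_subset h1 h2 hd
  omega

lemma InclP.compl_disj {s : Finset (Fin n)} {x : Fin n} (hx : x ∈ s) (hx' : x ∈ sᶜ) : False :=
  (Finset.mem_compl.mp hx') hx

lemma InclP.walk_two {V : Type*} {G : SimpleGraph V} {u v : V} (p : G.Walk u v)
    (hp : p.length = 2) : ∃ x, G.Adj u x ∧ G.Adj x v := by
  cases p with
  | nil => simp at hp
  | cons h q =>
    cases q with
    | nil => simp at hp
    | cons h2 r =>
      cases r with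
      | nil => exact ⟨_, h, h2⟩
      | cons h3 r' => simp [SimpleGraph.Walk.length_cons] at hp

lemma InclP.no_common_compl (W C : SubVert n) :
    ¬ ((inclGraph n).Adj W C ∧ (inclGraph n).Adj C (complVert W)) := by
  rintro ⟨h1 | h1, h2 | h2⟩
  · obtain ⟨w, hw⟩ := W.2.1
    exact InclP.compl_disj (s := W.1) hw (h2.subset (h1.subset hw))
  · refine C.2.2 (univ_subset_iff.mp ?_)
    intro x _
    have hx : x ∈ W.1 ∪ W.1ᶜ := by rw [Finset.union_compl]; exact Finset.mem_univ x
    rcases Finset.mem_union.mp hx with h | h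
    · exact h1.subset h
    · exact h2.subset h
  · obtain ⟨c, hc⟩ := C.2.1
    exact InclP.compl_disj (s := W.1) (h1.subset hc) (h2.subset hc)
  · obtain ⟨c, hc⟩ := (complVert W).2.1
    exact InclP.compl_disj (s := W.1) (h1.subset (h2.subset hc)) hc

lemma InclP.not_adj_compl (W : SubVert n) : ¬ (inclGraph n).Adj W (complVert W) := by
  rintro (h | h)
  · obtain ⟨w, hw⟩ := W.2.1
    exact InclP.compl_disj (s := W.1) hw (h.subset hw)
  · obtain ⟨c, hc⟩ := (complVert W).2.1
    exact InclP.compl_disj (s := W.1) (h.subset hc) hc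

lemma InclP.ne_compl (W : SubVert n) : W ≠ complVert W := by
  rw [InclP.vert_ne_iff]
  intro h
  obtain ⟨w, hw⟩ := W.2.1
  have h' : W.1 = W.1ᶜ := h
  have hw' : w ∈ W.1ᶜ := by rw [← h']; exact hw
  exact InclP.compl_disj (s := W.1) hw hw'

lemma InclP.compl_compl_vert (W : SubVert n) : complVert (complVert W) = W :=
  Subtype.ext (compl_compl W.1)

lemma InclP.compl_walk_aux (W : SubVert n) (hW : 2 ≤ W.1.card) :
    (inclGraph n).Reachable W (complVert W) ∧ (inclGraph n).dist W (complVert W) ≤ 3 := by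
  obtain ⟨w, hw⟩ := W.2.1
  obtain ⟨x, hx⟩ := (complVert W).2.1
  have hxW : x ∈ W.1ᶜ := hx
  have hxw : x ≠ w := fun h => InclP.compl_disj (s := W.1) (by rw [h]; exact hw) hxW
  have hsub : ({w} : Finset (Fin n)) ⊆ W.1 := Finset.singleton_subset_iff.mpr hw
  have hne1 : ({w} : Finset (Fin n)) ≠ W.1 := by
    intro h
    rw [← h] at hW
    simp at hW
  let V1 : SubVert n := ⟨{w}, Finset.singleton_nonempty w,
    fun h => W.2.2 (univ_subset_iff.mp (by
      intro y _
      have : y ∈ ({w} : Finset (Fin n)) := by rw [h]; exact Finset.mem_univ y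
      exact hsub this))⟩
  obtain ⟨w', hw', hww⟩ := Finset.exists_mem_ne (s := W.1) (by omega) w
  let V2 : SubVert n := ⟨insert w W.1ᶜ, Finset.insert_nonempty _ _, by
    intro h
    have : w' ∈ insert w W.1ᶜ := by rw [h]; exact Finset.mem_univ w'
    rcases Finset.mem_insert.mp this with h' | h'
    · exact hww h'
    · exact InclP.compl_disj hw' h'⟩
  have A1 : (inclGraph n).Adj W V1 := Or.inr (hsub.ssubset_of_ne hne1)
  have A2 : (inclGraph n).Adj V1 V2 := by
    refine Or.inl ((Finset.singleton_subset_iff.mpr (Finset.mem_insert_self w _)).ssubset_of_ne ?_)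
    intro h
    have : x ∈ ({w} : Finset (Fin n)) := h ▸ Finset.mem_insert_of_mem hxW
    exact hxw (Finset.mem_singleton.mp this)
  have A3 : (inclGraph n).Adj V2 (complVert W) := by
    refine Or.inr ?_
    show W.1ᶜ ⊂ insert w W.1ᶜ
    refine (Finset.subset_insert w _).ssubset_of_ne ?_
    intro h
    have hwc : w ∈ W.1ᶜ := by rw [h]; exact Finset.mem_insert_self w _
    exact InclP.compl_disj hw hwc
  let p : (inclGraph n).Walk W (complVert W) := .cons A1 (.cons A2 (.cons A3 .nil))
  exact ⟨p.reachable, SimpleGraph.dist_le p⟩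

lemma InclP.dist_compl (hn : 3 ≤ n) (W : SubVert n) :
    (inclGraph n).dist W (complVert W) = 3 := by
  have hcards : W.1.card + W.1ᶜ.card = n := by
    have := Finset.card_compl W.1
    have h2 : W.1.card ≤ Fintype.card (Fin n) := Finset.card_le_univ _
    simp only [Fintype.card_fin] at this h2
    omega
  have key : (inclGraph n).Reachable W (complVert W) ∧
      (inclGraph n).dist W (complVert W) ≤ 3 := by
    rcases le_or_gt 2 W.1.card with h | h
    · exact InclP.compl_walk_aux W h
    · have hc : 2 ≤ (complVert W).1.card := by
        have h1 : 1 ≤ W.1.card := Finset.card_pos.mpr W.2.1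
        show 2 ≤ W.1ᶜ.card
        omega
      have := InclP.compl_walk_aux (complVert W) hc
      rw [InclP.compl_compl_vert] at this
      exact ⟨this.1.symm, by rw [SimpleGraph.dist_comm]; exact this.2⟩
  have h0 : (inclGraph n).dist W (complVert W) ≠ 0 := by
    intro h0
    rw [key.1.dist_eq_zero_iff] at h0
    exact InclP.ne_compl W h0
  have h1 : (inclGraph n).dist W (complVert W) ≠ 1 := by
    intro hd
    rw [SimpleGraph.dist_eq_one_iff_adj] at hd
    exact InclP.not_adj_compl W hd
  have h2 : (inclGraph n).dist W (complVert W) ≠ 2 := by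
    intro hd
    obtain ⟨p, hp⟩ := key.1.exists_walk_length_eq_dist
    rw [hd] at hp
    obtain ⟨x, hx1, hx2⟩ := InclP.walk_two p hp
    exact InclP.no_common_compl W x ⟨hx1, hx2⟩
  omega

instance : DecidableEq (SubVert n) := by unfold SubVert; infer_instance
instance : Fintype (SubVert n) := by unfold SubVert; infer_instance

/-- explicit distance formula -/
def InclP.distF (A B : SubVert n) : ℕ :=
  if A = B then 0 else if A.1 ⊂ B.1 ∨ B.1 ⊂ A.1 then 1 else if A.1 = B.1ᶜ then 3 else 2

lemma InclP.dist_eq_distF (hn : 3 ≤ n) (A B : SubVert n) :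
    (inclGraph n).dist A B = InclP.distF A B := by
  unfold InclP.distF
  split_ifs with h1 h2 h3
  · subst h1; exact SimpleGraph.dist_self
  · exact SimpleGraph.dist_eq_one_iff_adj.mpr h2
  · have : A = complVert B := Subtype.ext h3
    rw [this, SimpleGraph.dist_comm]
    exact InclP.dist_compl hn B
  · push_neg at h2
    have hAB : A.1 ≠ B.1 := InclP.vert_ne_iff.mp h1
    exact InclP.dist_eq_two
      (fun h => h2.1 (h.ssubset_of_ne hAB))
      (fun h => h2.2 (h.ssubset_of_ne (Ne.symm hAB))) h3

lemma InclP.resolving_iff (hn : 3 ≤ n) (S : Finset (SubVert n)) :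
    IsResolving (inclGraph n) ↑S ↔
      ∀ u v : SubVert n, (∀ w ∈ S, InclP.distF u w = InclP.distF v w) → u = v := by
  constructor
  · intro h u v hv
    refine h u v (fun w hw => ?_)
    rw [InclP.dist_eq_distF hn, InclP.dist_eq_distF hn]
    exact hv w hw
  · intro h u v hv
    refine h u v (fun w hw => ?_)
    rw [← InclP.dist_eq_distF hn, ← InclP.dist_eq_distF hn]
    exact hv w hw

/-- the singleton vertex -/
def InclP.sVert (hn : 3 ≤ n) (i : Fin n) : SubVert n :=
  ⟨{i}, Finset.singleton_nonempty i, by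
    intro h
    have := Finset.card_univ (α := Fin n) ▸ congrArg Finset.card h
    simp only [Finset.card_singleton, Fintype.card_fin] at this
    omega⟩

lemma InclP.upper_mem (hn : 3 ≤ n) :
    n ∈ {k | ∃ S : Finset (SubVert n), S.card = k ∧ IsResolving (inclGraph n) ↑S} := by
  refine ⟨Finset.univ.image (InclP.sVert hn), ?_, ?_⟩
  · rw [Finset.card_image_of_injective _ (fun i j hij => ?_), Finset.card_univ, Fintype.card_fin]
    have : ({i} : Finset (Fin n)) = {j} := congrArg Subtype.val hij
    exact Finset.singleton_injective this
  · rw [show ((Finset.univ.image (InclP.sVert hn) : Finset (SubVert n)) : Set (SubVert n)) = _ from rfl]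
    intro u v huv
    have key : ∀ A : SubVert n, ∀ i : Fin n, (i ∈ A.1 ↔ InclP.distF A (InclP.sVert hn i) ≤ 1) := by
      intro A i
      unfold InclP.distF
      split_ifs with h1 h2 h3
      · subst h1; simp [InclP.sVert]
      · constructor
        · intro _; omega
        · intro _
          rcases h2 with h | h
          · exfalso
            have := Finset.ssubset_singleton_iff.mp h
            exact Finset.nonempty_iff_ne_empty.mp A.2.1 this
          · exact h.subset (Finset.mem_singleton_self i)
      · constructor
        · intro hi
          exfalso
          apply h2
          right
          refine (Finset.singleton_subset_iff.mpr hi).ssubset_of_ne ?_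
          intro h
          exact h1 (Subtype.ext h.symm)
        · intro h; omega
      · constructor
        · intro hi
          exfalso
          apply h2
          right
          refine (Finset.singleton_subset_iff.mpr hi).ssubset_of_ne ?_
          intro h
          exact h1 (Subtype.ext h.symm)
        · intro h; omega
    apply Subtype.ext
    ext i
    have hmem : InclP.sVert hn i ∈ (↑(Finset.univ.image (InclP.sVert hn)) : Set (SubVert n)) := by
      simp
    have hd := huv (InclP.sVert hn i) hmem
    rw [InclP.dist_eq_distF hn, InclP.dist_eq_distF hn] at hd
    rw [key u i, key v i, hd]

lemma InclP.card_subvert (hn : 3 ≤ n) : Fintype.card (SubVert n) = 2 ^ n - 2 := by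
  classical
  have h0 : Fintype.card (SubVert n) =
      Fintype.card {A : Finset (Fin n) // A.Nonempty ∧ A ≠ Finset.univ} :=
    Fintype.card_congr (Equiv.cast rfl)
  rw [h0, Fintype.card_subtype]
  have hsplit := Finset.card_filter_add_card_filter_not
    (s := (Finset.univ : Finset (Finset (Fin n))))
    (p := fun A => A.Nonempty ∧ A ≠ Finset.univ)
  have htot : (Finset.univ : Finset (Finset (Fin n))).card = 2 ^ n := by
    rw [Finset.card_univ, Fintype.card_finset, Fintype.card_fin]
  have hneg : (Finset.univ.filter (fun A : Finset (Fin n) =>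
      ¬(A.Nonempty ∧ A ≠ Finset.univ))).card = 2 := by
    have : (Finset.univ.filter (fun A : Finset (Fin n) =>
        ¬(A.Nonempty ∧ A ≠ Finset.univ))) = {∅, Finset.univ} := by
      ext A
      simp only [Finset.mem_filter, Finset.mem_univ, true_and, Finset.mem_insert,
        Finset.mem_singleton, not_and_or, not_not, Finset.not_nonempty_iff_eq_empty]
    rw [this]
    rw [Finset.card_insert_of_notMem, Finset.card_singleton]
    simp only [Finset.mem_singleton]
    intro h
    have : (⟨0, by omega⟩ : Fin n) ∈ (∅ : Finset (Fin n)) := by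
      rw [h]; exact Finset.mem_univ _
    simpa using this
  omega

lemma InclP.not_resolving (hn : 3 ≤ n) (S : Finset (SubVert n))
    (h : 2 ^ S.card + 2 * S.card + 3 ≤ 2 ^ n) :
    ¬ IsResolving (inclGraph n) ↑S := by
  classical
  rw [InclP.resolving_iff hn]
  intro hres
  set k := S.card with hk
  let Bad : Finset (SubVert n) := S ∪ S.image complVert
  let T : Finset (SubVert n) := Finset.univ \ Bad
  have hBad : Bad.card ≤ 2 * k := by
    calc Bad.card ≤ S.card + (S.image complVert).card := Finset.card_union_le _ _
    _ ≤ k + k := by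
        have := Finset.card_image_le (s := S) (f := complVert)
        omega
    _ = 2 * k := by omega
  have hTcard : 2 ^ k < T.card := by
    have h1 : T.card = Fintype.card (SubVert n) - Bad.card := by
      rw [Finset.card_sdiff_of_subset (Finset.subset_univ _), Finset.card_univ]
    have h2 := InclP.card_subvert hn
    have h3 : 2 ≤ 2 ^ n := by
      calc (2:ℕ) = 2 ^ 1 := rfl
      _ ≤ 2 ^ n := Nat.pow_le_pow_right (by omega) (by omega)
    omega
  have hfun : (Finset.univ : Finset ({x // x ∈ S} → Bool)).card = 2 ^ k := by
    rw [Finset.card_univ, Fintype.card_fun]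
    simp [hk]
  let f : SubVert n → ({x // x ∈ S} → Bool) :=
    fun A w => decide (A.1 ⊆ w.1.1 ∨ w.1.1 ⊆ A.1)
  obtain ⟨A, hA, B, hB, hne, heq⟩ :=
    Finset.exists_ne_map_eq_of_card_lt_of_maps_to (s := T)
      (t := (Finset.univ : Finset ({x // x ∈ S} → Bool))) (f := f)
      (by rw [hfun]; exact hTcard)
      (fun A _ => Finset.mem_univ (f A))
  have hprop : ∀ X : SubVert n, X ∈ T → X ∉ S ∧ ∀ w ∈ S, X.1 ≠ w.1ᶜ := by
    intro X hX
    simp only [T, Bad, Finset.mem_sdiff, Finset.mem_univ, true_and, Finset.mem_union,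
      Finset.mem_image, not_or, not_exists, not_and] at hX
    refine ⟨hX.1, fun w hw hXw => hX.2 w hw (Subtype.ext hXw.symm)⟩
  obtain ⟨hAS, hAc⟩ := hprop A hA
  obtain ⟨hBS, hBc⟩ := hprop B hB
  apply hne
  apply hres
  intro w hw
  have hpat : (A.1 ⊆ w.1 ∨ w.1 ⊆ A.1) ↔ (B.1 ⊆ w.1 ∨ w.1 ⊆ B.1) := by
    have h1 := congrFun heq ⟨w, hw⟩
    have h2 : decide (A.1 ⊆ w.1 ∨ w.1 ⊆ A.1) = decide (B.1 ⊆ w.1 ∨ w.1 ⊆ B.1) := h1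
    exact decide_eq_decide.mp h2
  have hAw : A ≠ w := fun h => hAS (h ▸ hw)
  have hBw : B ≠ w := fun h => hBS (h ▸ hw)
  have sub_iff : ∀ X : SubVert n, X ≠ w → ((X.1 ⊂ w.1 ∨ w.1 ⊂ X.1) ↔ (X.1 ⊆ w.1 ∨ w.1 ⊆ X.1)) := by
    intro X hXw
    have hXw' : X.1 ≠ w.1 := InclP.vert_ne_iff.mp hXw
    constructor
    · rintro (h | h)
      · exact Or.inl h.subset
      · exact Or.inr h.subset
    · rintro (h | h)
      · exact Or.inl (h.ssubset_of_ne hXw')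
      · exact Or.inr (h.ssubset_of_ne (Ne.symm hXw'))
  unfold InclP.distF
  rw [if_neg hAw, if_neg hBw, if_neg (hAc w hw), if_neg (hBc w hw)]
  by_cases hcomp : A.1 ⊂ w.1 ∨ w.1 ⊂ A.1
  · rw [if_pos hcomp, if_pos ?_]
    rw [sub_iff B hBw]
    rw [← hpat, ← sub_iff A hAw]
    exact hcomp
  · rw [if_neg hcomp, if_neg ?_]
    rw [sub_iff B hBw, ← hpat, ← sub_iff A hAw]
    exact hcomp

lemma InclP.arith5 : ∀ m : ℕ, 4 ≤ m → 2 * m + 3 ≤ 2 ^ m := by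
  intro m hm
  induction m, hm using Nat.le_induction with
  | base => norm_num
  | succ p hp ih =>
    have h2 : 2 ^ (p + 1) = 2 * 2 ^ p := by rw [pow_succ]; omega
    omega

lemma InclP.arith_main (hn : 5 ≤ n) {k : ℕ} (hk : k ≤ n - 1) :
    2 ^ k + 2 * k + 3 ≤ 2 ^ n := by
  obtain ⟨m, rfl⟩ : ∃ m, n = m + 1 := ⟨n - 1, by omega⟩
  have h1 : 2 ^ k ≤ 2 ^ m := Nat.pow_le_pow_right (by omega) (by omega)
  have h2 := InclP.arith5 m (by omega)
  have h3 : 2 ^ (m + 1) = 2 * 2 ^ m := by rw [pow_succ]; omega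
  omega

def InclP.S3 : Finset (SubVert 3) := {⟨{0}, by decide⟩, ⟨{1}, by decide⟩}

lemma InclP.S3_card : InclP.S3.card = 2 := by decide

lemma InclP.S3_res : IsResolving (inclGraph 3) ↑InclP.S3 := by
  rw [InclP.resolving_iff (by norm_num)]
  decide

def InclP.S4 : Finset (SubVert 4) := {⟨{0}, by decide⟩, ⟨{1}, by decide⟩, ⟨{2}, by decide⟩}

lemma InclP.S4_card : InclP.S4.card = 3 := by decide

lemma InclP.S4_res : IsResolving (inclGraph 4) ↑InclP.S4 := by
  rw [InclP.resolving_iff (by norm_num)]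
  decide

end InclProofDev

theorem stmt7 (n : ℕ) :
    (5 ≤ n → metricDim (inclGraph n) = n) ∧
      ((n = 3 ∨ n = 4) → metricDim (inclGraph n) = n - 1) := by
  constructor
  · intro h5
    have hn3 : (3 : ℕ) ≤ n := by omega
    refine le_antisymm (Nat.sInf_le (InclP.upper_mem hn3)) ?_
    refine le_csInf ⟨n, InclP.upper_mem hn3⟩ ?_
    rintro k ⟨S, rfl, hres⟩
    by_contra hlt
    push_neg at hlt
    exact InclP.not_resolving hn3 S (InclP.arith_main h5 (by omega)) hres
  · rintro (rfl | rfl)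
    · show metricDim (inclGraph 3) = 2
      refine le_antisymm (Nat.sInf_le ⟨InclP.S3, InclP.S3_card, InclP.S3_res⟩) ?_
      refine le_csInf ⟨2, InclP.S3, InclP.S3_card, InclP.S3_res⟩ ?_
      rintro k ⟨S, rfl, hres⟩
      by_contra hlt
      push_neg at hlt
      refine InclP.not_resolving (by norm_num) S ?_ hres
      have h1 : 2 ^ S.card ≤ 2 ^ 1 := Nat.pow_le_pow_right (by omega) (by omega)
      have h2 : (2:ℕ) ^ 1 = 2 := by norm_num
      have h3 : (2:ℕ) ^ 3 = 8 := by norm_num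
      omega
    · show metricDim (inclGraph 4) = 3
      refine le_antisymm (Nat.sInf_le ⟨InclP.S4, InclP.S4_card, InclP.S4_res⟩) ?_
      refine le_csInf ⟨3, InclP.S4, InclP.S4_card, InclP.S4_res⟩ ?_
      rintro k ⟨S, rfl, hres⟩
      by_contra hlt
      push_neg at hlt
      refine InclP.not_resolving (by norm_num) S ?_ hres
      have h1 : 2 ^ S.card ≤ 2 ^ 2 := Nat.pow_le_pow_right (by omega) (by omega)
      have h2 : (2:ℕ) ^ 2 = 4 := by norm_num
      have h3 : (2:ℕ) ^ 4 = 16 := by norm_num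
      omega
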